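/- Let n ≥ 2 and let A = (a_{ij}) be a real n × n matrix. Define σ₁(A) = Σ_{i=1}^n a_{ii}, σ₁(A|1) = Σ_{i=2}^n a_{ii}, and σ₂(A) = Σ_{1 ≤ i < j ≤ n} (a_{ii} a_{jj} − a_{ij} a_{ji}). Then σ₁(A)·σ₁(A|1) = σ₂(A) + (n/(2(n−1)))·[σ₁(A|1)]² + Σ_{1 ≤ i < j ≤ n} a_{ij} a_{ji} + (1/(2(n−1)))·Σ_{2 ≤ i < j ≤ n} (a_{ii} − a_{jj})². -/

import Mathlib

open Finset

private lemma diag_extract {k : ℕ} (i : Fin k) (f : Fin k → ℝ) :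
    (∑ j, if i ≠ j then f j else 0) = (∑ j, f j) - f i := by
  calc (∑ j, if i ≠ j then f j else 0)
      = ∑ j, (f j - if i = j then f j else 0) := by
        refine Finset.sum_congr rfl fun j _ => ?_
        by_cases h : i = j <;> simp [h]
    _ = (∑ j, f j) - f i := by
        rw [Finset.sum_sub_distrib, Finset.sum_ite_eq]
        simp

private lemma sym_sum {k : ℕ} (f : Fin k → Fin k → ℝ) (hf : ∀ i j, f i j = f j i) :
    2 * (∑ i, ∑ j, if i < j then f i j else 0) =
      ∑ i, ∑ j, if i ≠ j then f i j else 0 := by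
  have hswap : (∑ i, ∑ j, if i < j then f i j else 0)
      = ∑ i, ∑ j, if j < i then f i j else 0 := by
    rw [Finset.sum_comm]
    refine Finset.sum_congr rfl fun i _ => Finset.sum_congr rfl fun j _ => ?_
    split_ifs <;> simp [hf i j]
  rw [two_mul]
  nth_rewrite 2 [hswap]
  rw [← Finset.sum_add_distrib]
  refine Finset.sum_congr rfl fun i _ => ?_
  rw [← Finset.sum_add_distrib]
  refine Finset.sum_congr rfl fun j _ => ?_
  rcases lt_trichotomy i j with h | h | h
  · simp [h, h.ne, not_lt.mpr h.le]
  · simp [h]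
  · simp [h, h.ne', not_lt.mpr h.le]

private lemma sym_pair_sum {k : ℕ} (y : Fin k → ℝ) :
    2 * (∑ i, ∑ j, if i < j then y i * y j else 0) =
      (∑ i, y i) ^ 2 - ∑ i, (y i) ^ 2 := by
  rw [sym_sum (fun i j => y i * y j) (fun i j => mul_comm _ _)]
  have h : (∑ i, ∑ j, if i ≠ j then y i * y j else 0)
      = ∑ i, ((∑ j, y i * y j) - y i * y i) := by
    refine Finset.sum_congr rfl fun i _ => diag_extract i _
  rw [h, Finset.sum_sub_distrib, ← Finset.sum_mul_sum]
  congr 1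
  · exact (pow_two _).symm
  · exact Finset.sum_congr rfl fun i _ => (pow_two (y i)).symm

private lemma sym_sq_sum {k : ℕ} (y : Fin k → ℝ) :
    2 * (∑ i, ∑ j, if i < j then (y i - y j) ^ 2 else 0) =
      2 * ((k : ℝ) * (∑ i, (y i) ^ 2) - (∑ i, y i) ^ 2) := by
  rw [sym_sum (fun i j => (y i - y j) ^ 2) (fun i j => by ring)]
  have h1 : (∑ i, ∑ j, if i ≠ j then (y i - y j) ^ 2 else 0)
      = ∑ i, ∑ j, (y i - y j) ^ 2 := by
    refine Finset.sum_congr rfl fun i _ => Finset.sum_congr rfl fun j _ => ?_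
    split_ifs with h
    · rfl
    · simp at h; simp [h]
  rw [h1]
  have h2 : ∀ i, (∑ j : Fin k, (y i - y j) ^ 2)
      = (k : ℝ) * (y i)^2 - 2 * y i * (∑ j, y j) + ∑ j, (y j)^2 := by
    intro i
    have h3 : (∑ j : Fin k, (y i - y j) ^ 2)
        = ∑ j, ((y i)^2 - 2 * y i * y j + (y j)^2) := by
      refine Finset.sum_congr rfl fun j _ => by ring
    rw [h3, Finset.sum_add_distrib, Finset.sum_sub_distrib, Finset.sum_const,
      ← Finset.mul_sum]
    simp [mul_comm]
  rw [Finset.sum_congr rfl fun i _ => h2 i, Finset.sum_add_distrib,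
    Finset.sum_sub_distrib, Finset.sum_const]
  simp only [Finset.card_univ, Fintype.card_fin, nsmul_eq_mul]
  rw [← Finset.mul_sum, ← Finset.sum_mul]
  rw [show (∑ i : Fin k, 2 * y i) = 2 * ∑ i, y i from by rw [Finset.mul_sum]]
  ring

private lemma peel_lt {m : ℕ} (f : Fin (m + 1) → Fin (m + 1) → ℝ) :
    (∑ i, ∑ j, if i < j then f i j else 0) =
      (∑ j : Fin m, f 0 j.succ) +
        ∑ i : Fin m, ∑ j : Fin m, if i < j then f i.succ j.succ else 0 := by
  rw [Fin.sum_univ_succ]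
  congr 1
  · rw [Fin.sum_univ_succ]
    simp [Fin.succ_pos]
  · refine Finset.sum_congr rfl fun i _ => ?_
    rw [Fin.sum_univ_succ]
    simp [Fin.succ_lt_succ_iff]

private lemma peel_lt_ne {m : ℕ} (f : Fin (m + 1) → Fin (m + 1) → ℝ) :
    (∑ i, ∑ j, if i < j ∧ i ≠ 0 then f i j else 0) =
      ∑ i : Fin m, ∑ j : Fin m, if i < j then f i.succ j.succ else 0 := by
  rw [Fin.sum_univ_succ]
  have h0 : (∑ j, if (0 : Fin (m+1)) < j ∧ (0 : Fin (m+1)) ≠ 0 then f 0 j else 0) = 0 := by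
    simp
  rw [h0, zero_add]
  refine Finset.sum_congr rfl fun i _ => ?_
  rw [Fin.sum_univ_succ]
  simp [Fin.succ_lt_succ_iff, Fin.succ_ne_zero]

private lemma peel_ne {m : ℕ} (f : Fin (m + 1) → ℝ) :
    (∑ i, if i ≠ 0 then f i else 0) = ∑ i : Fin m, f i.succ := by
  rw [Fin.sum_univ_succ]
  simp [Fin.succ_ne_zero]

theorem stmt_0 (n : ℕ) (A : Matrix (Fin (n + 2)) (Fin (n + 2)) ℝ) :
    (∑ i, A i i) * (∑ i, if i ≠ 0 then A i i else 0) =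
      (∑ i, ∑ j, if i < j then A i i * A j j - A i j * A j i else 0)
        + ((n + 2 : ℝ) / (2 * (n + 1))) * (∑ i, if i ≠ 0 then A i i else 0) ^ 2
        + (∑ i, ∑ j, if i < j then A i j * A j i else 0)
        + (1 / (2 * (n + 1 : ℝ))) *
            ∑ i, ∑ j, if i < j ∧ i ≠ 0 then (A i i - A j j) ^ 2 else 0 := by
  have hE1 : (∑ i, if i ≠ 0 then A i i else 0) = ∑ i : Fin (n+1), A i.succ i.succ := by
    simpa using peel_ne (fun i => A i i)
  have hE2 : (∑ i : Fin (n+2), A i i) = A 0 0 + ∑ i : Fin (n+1), A i.succ i.succ :=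
    Fin.sum_univ_succ _
  have hP1 : (∑ i, ∑ j, if i < j then A i i * A j j - A i j * A j i else 0) =
      (∑ j : Fin (n+1), (A 0 0 * A j.succ j.succ - A 0 j.succ * A j.succ 0)) +
        ∑ i : Fin (n+1), ∑ j : Fin (n+1),
          if i < j then A i.succ i.succ * A j.succ j.succ - A i.succ j.succ * A j.succ i.succ
          else 0 := by
    simpa using peel_lt (fun i j => A i i * A j j - A i j * A j i)
  have hP2 : (∑ i, ∑ j, if i < j then A i j * A j i else 0) =
      (∑ j : Fin (n+1), A 0 j.succ * A j.succ 0) +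
        ∑ i : Fin (n+1), ∑ j : Fin (n+1),
          if i < j then A i.succ j.succ * A j.succ i.succ else 0 := by
    simpa using peel_lt (fun i j => A i j * A j i)
  have hP3 : (∑ i, ∑ j, if i < j ∧ i ≠ 0 then (A i i - A j j) ^ 2 else 0) =
      ∑ i : Fin (n+1), ∑ j : Fin (n+1),
        if i < j then (A i.succ i.succ - A j.succ j.succ) ^ 2 else 0 := by
    simpa using peel_lt_ne (fun i j => (A i i - A j j) ^ 2)
  rw [hE1, hE2, hP1, hP2, hP3]
  set s : ℝ := ∑ i : Fin (n+1), A i.succ i.succ with hs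
  set q : ℝ := ∑ i : Fin (n+1), (A i.succ i.succ)^2 with hq
  set P : ℝ := ∑ i : Fin (n+1), ∑ j : Fin (n+1),
      if i < j then A i.succ j.succ * A j.succ i.succ else 0 with hP
  set Q : ℝ := ∑ j : Fin (n+1), A 0 j.succ * A j.succ 0 with hQ
  have hS : (∑ i : Fin (n+1), ∑ j : Fin (n+1),
      if i < j then A i.succ i.succ * A j.succ j.succ else 0) = (s^2 - q)/2 := by
    have h := sym_pair_sum (fun i : Fin (n+1) => A i.succ i.succ)
    rw [hs, hq]
    linarith
  have hD : (∑ i : Fin (n+1), ∑ j : Fin (n+1),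
      if i < j then (A i.succ i.succ - A j.succ j.succ)^2 else 0)
      = ((n:ℝ) + 1) * q - s^2 := by
    have h := sym_sq_sum (fun i : Fin (n+1) => A i.succ i.succ)
    push_cast at h
    rw [hs, hq]
    linarith
  have hsplit : (∑ i : Fin (n+1), ∑ j : Fin (n+1),
      if i < j then A i.succ i.succ * A j.succ j.succ - A i.succ j.succ * A j.succ i.succ
      else 0)
      = (∑ i : Fin (n+1), ∑ j : Fin (n+1),
          if i < j then A i.succ i.succ * A j.succ j.succ else 0) - P := by
    rw [hP, ← Finset.sum_sub_distrib]
    refine Finset.sum_congr rfl fun i _ => ?_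
    rw [← Finset.sum_sub_distrib]
    refine Finset.sum_congr rfl fun j _ => ?_
    split_ifs <;> simp
  have hfirst : (∑ j : Fin (n+1), (A 0 0 * A j.succ j.succ - A 0 j.succ * A j.succ 0))
      = A 0 0 * s - Q := by
    rw [Finset.sum_sub_distrib, hs, hQ, Finset.mul_sum]
  rw [hsplit, hS, hD, hfirst]
  have hne : ((n : ℝ) + 1) ≠ 0 := by positivity
  field_simp
  ring
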